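/- Suppose u satisfies the Spence–Mirrlees condition and f : D_y → ℝ is u-subdifferentiable at every point of D_y. If f is differentiable at an interior point y ∈ D_y, then the u-subdifferential ∂^u f(y) is a singleton {z*(y)}, and f'(y) = ∂u/∂y (y, z*(y)); moreover f(y) = u(y, z*(y)) − f^u(z*(y)), and any selection y ↦ z*(y) with z*(y) ∈ ∂^u f(y) at each y is nondecreasing. -/

import Mathlib

open Set

/-- The `u`-dual of a real-valued function `f` on `Dy`:
`f^u(z) = sup_{y ∈ Dy} (u(y,z) - f(y))`, valued in `EReal`. -/
noncomputable def uDual (Dy : Set ℝ) (u : ℝ → ℝ → ℝ) (f : ℝ → ℝ) (z : ℝ) : EReal :=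
  ⨆ y ∈ Dy, ((u y z : EReal) - (f y : EReal))

/-- The `u`-subdifferential of `f` at `y`:
`∂^u f(y) = { z ∈ Dz : f(y) + f^u(z) = u(y,z) }`. -/
def uSubdiff (Dy Dz : Set ℝ) (u : ℝ → ℝ → ℝ) (f : ℝ → ℝ) (y : ℝ) : Set ℝ :=
  {z | z ∈ Dz ∧ (f y : EReal) + uDual Dy u f z = (u y z : EReal)}

/-- The Spence–Mirrlees condition: `u` is C², `z ↦ u_y(y,z)` is strictly increasing on
`Dz` for each `y ∈ Dy`, and `y ↦ u_z(y,z)` is strictly increasing on `Dy` for each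
`z ∈ Dz`. -/
def SpenceMirrlees (Dy Dz : Set ℝ) (u : ℝ → ℝ → ℝ) : Prop :=
  ContDiff ℝ 2 (Function.uncurry u) ∧
  (∀ y ∈ Dy, StrictMonoOn (fun z => deriv (fun y' => u y' z) y) Dz) ∧
  (∀ z ∈ Dz, StrictMonoOn (fun y => deriv (fun z' => u y z') z) Dy)

-- aux: uDual value
lemma uDual_eq_of_mem {Dy : Set ℝ} {u : ℝ → ℝ → ℝ} {f : ℝ → ℝ} {y z : ℝ}
    (h : (f y : EReal) + uDual Dy u f z = (u y z : EReal)) :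
    uDual Dy u f z = ((u y z - f y : ℝ) : EReal) := by
  set d := uDual Dy u f z with hdd
  have ht : d ≠ ⊤ := by intro h'; rw [h'] at h; simp at h
  have hb : d ≠ ⊥ := by intro h'; rw [h'] at h; simp at h
  lift d to ℝ using ⟨ht, hb⟩ with r
  rw [← EReal.coe_add] at h
  rw [EReal.coe_eq_coe_iff] at h ⊢
  linarith

lemma key_ineq {Dy Dz : Set ℝ} {u : ℝ → ℝ → ℝ} {f : ℝ → ℝ} {y z w : ℝ}
    (hz : z ∈ uSubdiff Dy Dz u f y) (hw : w ∈ Dy) :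
    u w z - f w ≤ u y z - f y := by
  have hd := uDual_eq_of_mem hz.2
  have hle : ((u w z : EReal) - (f w : EReal)) ≤ uDual Dy u f z :=
    le_iSup₂ (f := fun v (_ : v ∈ Dy) => ((u v z : EReal) - (f v : EReal))) w hw
  rw [hd, ← EReal.coe_sub] at hle
  exact_mod_cast hle

lemma diffAt_partial_y {u : ℝ → ℝ → ℝ} (hu : ContDiff ℝ 2 (Function.uncurry u))
    (z y : ℝ) : DifferentiableAt ℝ (fun y' => u y' z) y := by
  have h1 : Differentiable ℝ (Function.uncurry u) := hu.differentiable (by norm_num)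
  exact (h1.comp (differentiable_id.prodMk (differentiable_const z))).differentiableAt

lemma diffAt_partial_z {u : ℝ → ℝ → ℝ} (hu : ContDiff ℝ 2 (Function.uncurry u))
    (y z : ℝ) : DifferentiableAt ℝ (fun z' => u y z') z := by
  have h1 : Differentiable ℝ (Function.uncurry u) := hu.differentiable (by norm_num)
  exact (h1.comp ((differentiable_const y).prodMk differentiable_id)).differentiableAt

-- derivative identity at interior points
lemma deriv_eq_of_mem {Dy Dz : Set ℝ} {u : ℝ → ℝ → ℝ} {f : ℝ → ℝ} {y z : ℝ}
    (hu : ContDiff ℝ 2 (Function.uncurry u))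
    (hz : z ∈ uSubdiff Dy Dz u f y) (hy : y ∈ interior Dy)
    (hdiff : DifferentiableAt ℝ f y) :
    deriv f y = deriv (fun y' => u y' z) y := by
  have hmin : IsLocalMin (fun w => f w - u w z) y := by
    have hnh : Dy ∈ nhds y := mem_interior_iff_mem_nhds.mp hy
    filter_upwards [hnh] with w hw
    have := key_ineq hz hw
    show f y - u y z ≤ f w - u w z
    linarith
  have hdu := diffAt_partial_y hu z y
  have h0 : deriv (fun w => f w - u w z) y = 0 := hmin.deriv_eq_zero
  rw [deriv_fun_sub hdiff hdu] at h0
  linarith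

/-- Under the Spence–Mirrlees condition, if `f` is `u`-subdifferentiable on `Dy` and
differentiable at an interior point `y`, then `∂^u f(y)` is a singleton `{z*}` with
`f'(y) = u_y(y, z*)` and `f(y) = u(y, z*) - f^u(z*)`; moreover any selection of the
`u`-subdifferential is nondecreasing on `Dy`. -/
theorem uSubdiff_singleton_of_differentiable
    (Dy Dz : Set ℝ) (hDy : Dy.Nonempty) (hDz : Dz.Nonempty)
    (hDyI : Dy.OrdConnected) (hDzI : Dz.OrdConnected)
    (u : ℝ → ℝ → ℝ) (hSM : SpenceMirrlees Dy Dz u) (f : ℝ → ℝ)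
    (hsub : ∀ y ∈ Dy, (uSubdiff Dy Dz u f y).Nonempty)
    (y : ℝ) (hy : y ∈ interior Dy) (hdiff : DifferentiableAt ℝ f y) :
    (∃ zs : ℝ, uSubdiff Dy Dz u f y = {zs} ∧
      deriv f y = deriv (fun y' => u y' zs) y ∧
      (f y : EReal) = (u y zs : EReal) - uDual Dy u f zs) ∧
    (∀ zsel : ℝ → ℝ, (∀ w ∈ Dy, zsel w ∈ uSubdiff Dy Dz u f w) →
      MonotoneOn zsel Dy) := by
  obtain ⟨hu, hSM1, hSM2⟩ := hSM
  have hyD : y ∈ Dy := interior_subset hy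
  constructor
  · obtain ⟨zs, hzs⟩ := hsub y hyD
    refine ⟨zs, ?_, deriv_eq_of_mem hu hzs hy hdiff, ?_⟩
    · apply Set.eq_singleton_iff_unique_mem.mpr
      refine ⟨hzs, fun z hz => ?_⟩
      have h1 := deriv_eq_of_mem hu hz hy hdiff
      have h2 := deriv_eq_of_mem hu hzs hy hdiff
      exact (hSM1 y hyD).injOn hz.1 hzs.1 (h1 ▸ h2)
    · rw [uDual_eq_of_mem hzs.2, ← EReal.coe_sub]
      norm_num
  · intro zsel hsel w1 hw1 w2 hw2 hle
    rcases eq_or_lt_of_le hle with rfl | hlt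
    · exact le_refl _
    · by_contra hcon
      push_neg at hcon
      set z1 := zsel w1
      set z2 := zsel w2
      have hz1 := hsel w1 hw1
      have hz2 := hsel w2 hw2
      have hA : u w2 z1 - f w2 ≤ u w1 z1 - f w1 := key_ineq hz1 hw2
      have hB : u w1 z2 - f w1 ≤ u w2 z2 - f w2 := key_ineq hz2 hw1
      -- φ z = u w2 z - u w1 z, φ z1 ≤ φ z2
      have hφle : u w2 z1 - u w1 z1 ≤ u w2 z2 - u w1 z2 := by linarith
      -- MVT on [z2, z1]
      have hIcc : Icc z2 z1 ⊆ Dz := hDzI.out hz2.1 hz1.1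
      have hdφ : ∀ c, DifferentiableAt ℝ (fun z => u w2 z - u w1 z) c :=
        fun c => (diffAt_partial_z hu w2 c).sub (diffAt_partial_z hu w1 c)
      obtain ⟨c, hc, hceq⟩ := exists_deriv_eq_slope (fun z => u w2 z - u w1 z) hcon
        (fun x _ => (hdφ x).continuousAt.continuousWithinAt)
        (fun x _ => (hdφ x).differentiableWithinAt)
      have hcD : c ∈ Dz := hIcc ⟨le_of_lt hc.1, le_of_lt hc.2⟩
      have hpos : deriv (fun z => u w2 z - u w1 z) c > 0 := by
        rw [deriv_fun_sub (diffAt_partial_z hu w2 c) (diffAt_partial_z hu w1 c)]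
        have := hSM2 c hcD hw1 hw2 hlt
        simpa using sub_pos.mpr this
      rw [hceq] at hpos
      have hden : z1 - z2 > 0 := sub_pos.mpr hcon
      have : (u w2 z1 - u w1 z1) - (u w2 z2 - u w1 z2) > 0 := by
        have := mul_pos hpos hden
        rw [div_mul_cancel₀] at this
        · linarith
        · linarith
      linarith
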